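/- Let α, β be purely imaginary quaternions with ‖α‖ = ‖β‖ = 1, and set v = (1/2)(1 + αβ) and w = (1/2)(α - β). Then v = -α·w; consequently ‖v‖ = ‖w‖ and the Euclidean inner product of v and w in ℍ ≅ ℝ⁴ is zero. In particular, if v ≠ 0, the curve t ↦ exp(tα)·exp(-tβ) traces a geometric circle of radius ‖v‖ centered at (1/2)(1 - αβ). -/

import Mathlib

open Quaternion RealInnerProductSpace

lemma exp_smul_im' (γ : ℍ[ℝ]) (hγ : γ.re = 0) (hγ1 : ‖γ‖ = 1) (t : ℝ) :
    NormedSpace.exp (t • γ) = Real.cos t • (1 : ℍ[ℝ]) + Real.sin t • γ := by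
  have hcoe : ∀ c : ℝ, ((c : ℝ) : ℍ[ℝ]) = c • (1 : ℍ[ℝ]) := fun c => by
    rw [← Quaternion.coe_one, Quaternion.smul_coe, mul_one]
  rcases eq_or_ne t 0 with rfl | ht
  · simp [NormedSpace.exp_zero]
  · rw [Quaternion.exp_of_re_eq_zero (t • γ) (by simp [hγ]), norm_smul, hγ1, mul_one,
      smul_smul, Real.norm_eq_abs, hcoe]
    congr 1
    · rw [Real.cos_abs]
    · congr 1
      rcases lt_or_gt_of_ne ht with h | h
      · rw [abs_of_neg h, Real.sin_neg]
        field_simp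
      · rw [abs_of_pos h]
        field_simp

/-- For purely imaginary unit quaternions `α, β`, with `v = (1/2)(1 + αβ)` and
`w = (1/2)(α - β)` one has `v = -α·w`, hence `‖v‖ = ‖w‖` and `⟪v,w⟫ = 0`; in particular,
if `v ≠ 0` the curve `t ↦ exp(tα)·exp(-tβ)` traces a geometric circle of radius `‖v‖`
centered at `p = (1/2)(1 - αβ)`. -/
theorem circle_data (α β : ℍ[ℝ])
    (hα : α.re = 0) (hβ : β.re = 0) (hα1 : ‖α‖ = 1) (hβ1 : ‖β‖ = 1)
    (v w p : ℍ[ℝ])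
    (hv : v = (1/2 : ℝ) • (1 + α * β))
    (hw : w = (1/2 : ℝ) • (α - β))
    (hp : p = (1/2 : ℝ) • (1 - α * β)) :
    v = -α * w ∧ ‖v‖ = ‖w‖ ∧ ⟪v, w⟫ = 0 ∧
      (v ≠ 0 → ∀ t : ℝ,
        (∃ s : ℝ, NormedSpace.exp (t • α) * NormedSpace.exp (-(t • β)) =
          p + Real.cos s • v + Real.sin s • w) ∧
        ‖NormedSpace.exp (t • α) * NormedSpace.exp (-(t • β)) - p‖ = ‖v‖) := by
  have hnsα : Quaternion.normSq α = 1 := by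
    rw [Quaternion.normSq_eq_norm_mul_self, hα1, mul_one]
  have hαα : α * α = -1 := by
    have hst : star α = -α := Quaternion.star_eq_neg.2 hα
    have h := Quaternion.self_mul_star (a := α)
    rw [hst, hnsα, mul_neg] at h
    rw [← neg_neg (α * α), h]
    norm_num
  have h1 : v = -α * w := by
    rw [hv, hw, mul_smul_comm]
    congr 1
    rw [neg_mul, mul_sub, hαα]
    noncomm_ring
  have h2 : ‖v‖ = ‖w‖ := by
    rw [h1, neg_mul, norm_neg, norm_mul, hα1, one_mul]
  have h3 : ⟪v, w⟫ = 0 := by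
    rw [h1, Quaternion.inner_def, neg_mul, neg_mul, mul_assoc, Quaternion.self_mul_star]
    simp [Quaternion.mul_coe_eq_smul, Quaternion.re_smul, hα]
  refine ⟨h1, h2, h3, fun _ t => ?_⟩
  have hwv : w = α * v := by
    rw [h1, neg_mul, mul_neg, ← mul_assoc, hαα]
    simp
  have key : NormedSpace.exp (t • α) * NormedSpace.exp (-(t • β)) =
      p + Real.cos (2 * t) • v + Real.sin (2 * t) • w := by
    rw [show -(t • β) = (-t) • β from (neg_smul t β).symm, exp_smul_im' α hα hα1,
      exp_smul_im' β hβ hβ1, Real.cos_neg, Real.sin_neg, hv, hw, hp]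
    have hc := Real.sin_sq_add_cos_sq t
    simp only [add_mul, mul_add, mul_sub, sub_mul, mul_neg, neg_mul, smul_mul_assoc, mul_smul_comm,
      smul_smul, one_mul, mul_one, neg_smul, smul_neg, Real.cos_two_mul, Real.sin_two_mul]
    match_scalars <;> nlinarith [hc]
  refine ⟨⟨2 * t, key⟩, ?_⟩
  rw [key]
  have hrw : p + Real.cos (2*t) • v + Real.sin (2*t) • w - p
      = NormedSpace.exp ((2*t) • α) * v := by
    rw [exp_smul_im' α hα hα1, add_mul, smul_mul_assoc, smul_mul_assoc, one_mul, ← hwv]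
    abel
  rw [hrw, norm_mul, Quaternion.norm_exp]
  simp [Quaternion.re_smul, hα]
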